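/- Let K be a field of characteristic 0 and U a nonempty finite subset of ℤ with |U| = u and 2k ≤ u, and let d satisfy 2d ≤ k. Let H_{U,k,d} be the matrix (∂^{M(V)} ∂^{M(V')} Φ_{U,k})_{V,V' ∈ C(U,2d)} with entries in P_U. Then the evaluation of det(H_{U,k,d}) at x_e = 1 for all edges e is a nonzero element of K; in particular det(H_{U,k,d}) is a nonzero polynomial. -/

import Mathlib

open MvPolynomial Finset

noncomputable section

/-- The set of matchings with exactly `k` edges of the complete graph on vertex set `V ⊆ ℤ`:
sets of `k` pairwise disjoint 2-element subsets of `V`. -/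
def matchings (V : Finset ℤ) (k : ℕ) : Finset (Finset (Finset ℤ)) :=
  (V.powersetCard 2).powerset.filter fun M =>
    M.card = k ∧ ∀ e ∈ M, ∀ f ∈ M, e ≠ f → Disjoint e f

/-- `S` is a matching of the complete graph on vertex set `V`. -/
def IsMatching (V : Finset ℤ) (S : Finset (Finset ℤ)) : Prop :=
  S ⊆ V.powersetCard 2 ∧ ∀ e ∈ S, ∀ f ∈ S, e ≠ f → Disjoint e f

/-- The weighted generating function `Φ_{V,k} = Σ_{M ∈ M(V,k)} x^M` of `k`-edge matchings,
an element of the polynomial ring with variables indexed by (potential) edges. -/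
def Phi (K : Type*) [Field K] (V : Finset ℤ) (k : ℕ) : MvPolynomial (Finset ℤ) K :=
  ∑ M ∈ matchings V k, ∏ e ∈ M, X e

/-- The differential operator `∂^S = Π_{i ∈ S} ∂/∂x_i` applied to `p`. -/
def dset {K : Type*} [CommSemiring K] {ι : Type*} [DecidableEq ι]
    (S : Finset ι) (p : MvPolynomial ι K) : MvPolynomial ι K :=
  S.toList.foldr (fun i q => pderiv i q) p

/-- The differential operator `∂^m = Π_i (∂/∂x_i)^{m i}` of a monomial exponent `m`. -/
def dmon {K : Type*} [CommSemiring K] {ι : Type*} [DecidableEq ι]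
    (m : ι →₀ ℕ) (p : MvPolynomial ι K) : MvPolynomial ι K :=
  m.support.toList.foldr (fun i q => (⇑(pderiv (R := K) i))^[m i] q) p

/-- The linear map `f ↦ f(∂)Φ`, where `f(∂)` is obtained from `f` by substituting
`∂/∂x_i` for `x_i`. -/
def diffOp (K : Type*) [Field K] {ι : Type*} [DecidableEq ι]
    (Φ : MvPolynomial ι K) : MvPolynomial ι K →ₗ[K] MvPolynomial ι K :=
  (basisMonomials ι K).constr K fun m => dmon m Φ

/-- The annihilator `Ann(Φ) = {f : f(∂)Φ = 0}`. -/
def Ann (K : Type*) [Field K] {ι : Type*} [DecidableEq ι]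
    (Φ : MvPolynomial ι K) : Submodule K (MvPolynomial ι K) :=
  LinearMap.ker (diffOp K Φ)

/-- The canonical matching `M(V) = {{v₁,v₂},{v₃,v₄},…}` on `V = {v₁ < v₂ < ⋯}`. -/
def canonMatching (V : Finset ℤ) : Finset (Finset ℤ) :=
  (Finset.range (V.card / 2)).image fun i =>
    ({(V.sort (· ≤ ·)).getD (2 * i) 0, (V.sort (· ≤ ·)).getD (2 * i + 1) 0} : Finset ℤ)

/-- The `n`-th elementary symmetric polynomial in the variables indexed by `U`. -/
def elemSymm (K : Type*) [Field K] {ι : Type*} (U : Finset ι) (n : ℕ) : MvPolynomial ι K :=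
  ∑ S ∈ U.powersetCard n, ∏ i ∈ S, X i

end

noncomputable section



variable {K : Type*} [CommSemiring K] {ι : Type*} [DecidableEq ι]

lemma pderiv_prod_X (i : ι) (M : Finset ι) :
    pderiv i (∏ e ∈ M, (X e : MvPolynomial ι K)) =
      if i ∈ M then ∏ e ∈ M.erase i, X e else 0 := by
  classical
  induction M using Finset.induction_on with
  | empty => simp
  | @insert a M ha ih =>
    rw [Finset.prod_insert ha, pderiv_mul, pderiv_X, ih]
    by_cases hia : i = a
    · subst hia
      simp [ha, Finset.erase_insert ha]
    · simp only [Pi.single_apply]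
      rw [if_neg (fun h => hia h.symm)]
      by_cases hiM : i ∈ M
      · simp only [hiM, if_pos (Finset.mem_insert_of_mem hiM), if_true]
        rw [Finset.erase_insert_of_ne (fun h : a = i => hia h.symm), Finset.prod_insert (fun h => ha (Finset.mem_of_mem_erase h))]
        ring
      · simp [hiM, hia]

lemma foldr_pderiv_prod_X (l : List ι) (hl : l.Nodup) (M : Finset ι) :
    l.foldr (fun i q => pderiv i q) (∏ e ∈ M, (X e : MvPolynomial ι K)) =
      if l.toFinset ⊆ M then ∏ e ∈ M \ l.toFinset, X e else 0 := by
  induction l with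
  | nil => simp
  | cons a l ih =>
    have hnd := hl
    rw [List.nodup_cons] at hnd
    rw [List.foldr_cons, ih hnd.2]
    by_cases h : l.toFinset ⊆ M
    · rw [if_pos h, pderiv_prod_X]
      by_cases ha : a ∈ M
      · have haM : a ∈ M \ l.toFinset := by
          exact Finset.mem_sdiff.mpr ⟨ha, fun h' => hnd.1 (List.mem_toFinset.mp h')⟩
        rw [if_pos haM]
        have hsub : (a :: l).toFinset ⊆ M := by
          simp only [List.toFinset_cons, Finset.insert_subset_iff]; exact ⟨ha, h⟩
        rw [if_pos hsub]
        congr 1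
        simp only [List.toFinset_cons]
        rw [Finset.sdiff_insert]
      · have : a ∉ M \ l.toFinset := fun h' => ha (Finset.mem_sdiff.mp h').1
        rw [if_neg this, if_neg]
        intro hsub
        exact ha (hsub (by simp))
    · rw [if_neg h, map_zero, if_neg]
      intro hsub
      exact h (fun x hx => hsub (by simp [List.mem_toFinset.mp hx]))

lemma dset_prod_X (S : Finset ι) (M : Finset ι) :
    dset S (∏ e ∈ M, (X e : MvPolynomial ι K)) =
      if S ⊆ M then ∏ e ∈ M \ S, X e else 0 := by
  rw [dset, foldr_pderiv_prod_X _ (S.nodup_toList), Finset.toList_toFinset]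

lemma dset_sum {α : Type*} (S : Finset ι) (F : Finset α) (f : α → MvPolynomial ι K) :
    dset S (∑ i ∈ F, f i) = ∑ i ∈ F, dset S (f i) := by
  unfold dset
  induction S.toList with
  | nil => simp
  | cons a l ih => simp [List.foldr_cons, ih, map_sum]



section canon
variable {V : Finset ℤ} {d : ℕ} (hV : V.card = 2 * d)

lemma sort_length : (V.sort (· ≤ ·)).length = V.card := Finset.length_sort _

lemma canon_getD {j : ℕ} (hj : j < V.card) :
    (V.sort (· ≤ ·)).getD j 0 = (V.sort (· ≤ ·)).get ⟨j, by rwa [sort_length]⟩ :=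
  List.getD_eq_getElem _ _ (by rwa [sort_length])

lemma sort_get_mem (p : Fin (V.sort (· ≤ ·)).length) : (V.sort (· ≤ ·)).get p ∈ V :=
  (Finset.mem_sort (α := ℤ) (· ≤ ·)).mp (List.get_mem _ _)

include hV

lemma canon_mem_edge {e : Finset ℤ} (he : e ∈ canonMatching V) :
    ∃ i : Fin d, e = {(V.sort (· ≤ ·)).get ⟨2*i.1, by rw [sort_length, hV]; omega⟩,
      (V.sort (· ≤ ·)).get ⟨2*i.1+1, by rw [sort_length, hV]; omega⟩} := by
  rw [canonMatching, Finset.mem_image] at he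
  obtain ⟨i, hi, rfl⟩ := he
  rw [Finset.mem_range, hV] at hi
  have hi' : i < d := by omega
  refine ⟨⟨i, hi'⟩, ?_⟩
  have h1 : 2*i < V.card := by omega
  have h2 : 2*i+1 < V.card := by omega
  rw [canon_getD h1, canon_getD h2]

lemma canon_edge_card {e : Finset ℤ} (he : e ∈ canonMatching V) : e.card = 2 := by
  obtain ⟨i, rfl⟩ := canon_mem_edge hV he
  rw [Finset.card_insert_of_notMem, Finset.card_singleton]
  simp only [Finset.mem_singleton]
  intro h
  have hinj := (List.nodup_iff_injective_get).mp (V.sort_nodup (· ≤ ·))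
  have := hinj h
  simp only [Fin.mk.injEq] at this
  omega

lemma canon_edge_subset {e : Finset ℤ} (he : e ∈ canonMatching V) : e ⊆ V := by
  obtain ⟨i, rfl⟩ := canon_mem_edge hV he
  intro x hx
  rcases Finset.mem_insert.mp hx with h | h
  · subst h; exact sort_get_mem _
  · rw [Finset.mem_singleton] at h; subst h; exact sort_get_mem _

lemma canon_subset_powerset : canonMatching V ⊆ V.powersetCard 2 := by
  intro e he
  rw [Finset.mem_powersetCard]
  exact ⟨canon_edge_subset hV he, canon_edge_card hV he⟩

lemma canon_disjoint {e f : Finset ℤ} (he : e ∈ canonMatching V) (hf : f ∈ canonMatching V)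
    (hef : e ≠ f) : Disjoint e f := by
  obtain ⟨i, rfl⟩ := canon_mem_edge hV he
  obtain ⟨j, rfl⟩ := canon_mem_edge hV hf
  have hij : i.1 ≠ j.1 := by
    intro h
    exact hef (by congr 1 <;> simp [Fin.ext_iff, h])
  have hinj := (List.nodup_iff_injective_get).mp (V.sort_nodup (· ≤ ·))
  rw [Finset.disjoint_left]
  intro a ha ha'
  have key : ∀ (p q : Fin (V.sort (· ≤ ·)).length),
      (V.sort (· ≤ ·)).get p = a → (V.sort (· ≤ ·)).get q = a → (p:ℕ) = (q:ℕ) := by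
    intro p q hp hq
    exact congrArg Fin.val (hinj (hp.trans hq.symm))
  rcases Finset.mem_insert.mp ha with h1 | h1 <;> rcases Finset.mem_insert.mp ha' with h2 | h2
  · have := key _ _ h1.symm h2.symm; simp only at this; omega
  · rw [Finset.mem_singleton] at h2
    have := key _ _ h1.symm h2.symm; simp only at this; omega
  · rw [Finset.mem_singleton] at h1
    have := key _ _ h1.symm h2.symm; simp only at this; omega
  · rw [Finset.mem_singleton] at h1 h2
    have := key _ _ h1.symm h2.symm; simp only at this; omega

lemma canon_card : (canonMatching V).card = d := by
  rw [canonMatching, hV]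
  have hd2 : 2 * d / 2 = d := Nat.mul_div_cancel_left d (by norm_num)
  rw [hd2, Finset.card_image_of_injOn, Finset.card_range]
  intro i hi j hj hij
  rw [Finset.mem_coe, Finset.mem_range] at hi hj
  by_contra hne
  dsimp only at hij
  have h2i : 2*i < V.card := by omega
  have h2j : 2*j < V.card := by omega
  have h2j1 : 2*j+1 < V.card := by omega
  have hinj := (List.nodup_iff_injective_get).mp (V.sort_nodup (· ≤ ·))
  have hmem : (V.sort (· ≤ ·)).getD (2*i) 0 ∈
      ({(V.sort (· ≤ ·)).getD (2 * j) 0, (V.sort (· ≤ ·)).getD (2 * j + 1) 0} : Finset ℤ) := by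
    rw [← hij]; simp
  rcases Finset.mem_insert.mp hmem with h | h
  · rw [canon_getD h2i, canon_getD h2j] at h
    have := hinj h; simp only [Fin.mk.injEq] at this; omega
  · rw [Finset.mem_singleton] at h
    rw [canon_getD h2i, canon_getD h2j1] at h
    have := hinj h; simp only [Fin.mk.injEq] at this; omega

lemma canon_cover {v : ℤ} (hv : v ∈ V) : ∃ e ∈ canonMatching V, v ∈ e := by
  have hv' : v ∈ V.sort (· ≤ ·) := (Finset.mem_sort (α := ℤ) (· ≤ ·)).mpr hv
  obtain ⟨⟨j, hj⟩, hjv⟩ := List.mem_iff_get.mp hv'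
  rw [sort_length, hV] at hj
  have hjc : j < V.card := by omega
  refine ⟨{(V.sort (· ≤ ·)).getD (2 * (j/2)) 0, (V.sort (· ≤ ·)).getD (2 * (j/2) + 1) 0}, ?_, ?_⟩
  · rw [canonMatching, Finset.mem_image]
    exact ⟨j/2, by rw [Finset.mem_range, hV]; omega, rfl⟩
  · rcases Nat.even_or_odd j with ⟨m, hm⟩ | ⟨m, hm⟩
    · have h1 : 2 * (j/2) = j := by omega
      rw [h1, canon_getD hjc]
      exact Finset.mem_insert.mpr (Or.inl hjv.symm)
    · have h1 : 2 * (j/2) + 1 = j := by omega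
      rw [h1, canon_getD hjc]
      exact Finset.mem_insert.mpr (Or.inr (Finset.mem_singleton.mpr hjv.symm))

lemma canon_biUnion : (canonMatching V).biUnion id = V := by
  apply Finset.Subset.antisymm
  · intro x hx
    rw [Finset.mem_biUnion] at hx
    obtain ⟨e, he, hx⟩ := hx
    exact canon_edge_subset hV he hx
  · intro v hv
    obtain ⟨e, he, hve⟩ := canon_cover hV hv
    exact Finset.mem_biUnion.mpr ⟨e, he, hve⟩

end canon



lemma mem_matchings_iff {W : Finset ℤ} {j : ℕ} {M : Finset (Finset ℤ)} :
    M ∈ matchings W j ↔ (∀ e ∈ M, e ⊆ W ∧ e.card = 2) ∧ M.card = j ∧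
      ∀ e ∈ M, ∀ f ∈ M, e ≠ f → Disjoint e f := by
  rw [matchings, Finset.mem_filter, Finset.mem_powerset]
  constructor
  · rintro ⟨h1, h2, h3⟩
    exact ⟨fun e he => Finset.mem_powersetCard.mp (h1 he), h2, h3⟩
  · rintro ⟨h1, h2, h3⟩
    exact ⟨fun e he => Finset.mem_powersetCard.mpr (h1 e he), h2, h3⟩

/-- transport of matchings along a map injective on `W` sending `W` onto `W'` -/
lemma matchings_card_le (W W' : Finset ℤ) (g : ℤ → ℤ) (hinj : Set.InjOn g W)
    (himg : W.image g = W') (j : ℕ) :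
    (matchings W j).card ≤ (matchings W' j).card := by
  classical
  apply Finset.card_le_card_of_injOn (fun M => M.image (fun e => e.image g))
  · intro M hM
    simp only [Finset.mem_coe] at hM ⊢
    rw [mem_matchings_iff] at hM ⊢
    obtain ⟨h1, h2, h3⟩ := hM
    have hedge : ∀ e ∈ M, (e.image g).card = 2 := by
      intro e he
      rw [Finset.card_image_of_injOn (hinj.mono (by exact_mod_cast (h1 e he).1)), (h1 e he).2]
    refine ⟨?_, ?_, ?_⟩
    · intro e' he'
      rw [Finset.mem_image] at he'
      obtain ⟨e, he, rfl⟩ := he'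
      constructor
      · intro x hx
        rw [Finset.mem_image] at hx
        obtain ⟨a, ha, rfl⟩ := hx
        rw [← himg]
        exact Finset.mem_image_of_mem g ((h1 e he).1 ha)
      · exact hedge e he
    · rw [Finset.card_image_of_injOn, h2]
      intro e he f hf hef
      dsimp only at hef
      have : ∀ x ∈ e, x ∈ f := by
        intro x hx
        have hgx : g x ∈ f.image g := by rw [← hef]; exact Finset.mem_image_of_mem g hx
        rw [Finset.mem_image] at hgx
        obtain ⟨y, hy, hxy⟩ := hgx
        have := hinj ((h1 f hf).1 hy) ((h1 e he).1 hx) hxy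
        rwa [this] at hy
      have : ∀ x ∈ f, x ∈ e := by
        intro x hx
        have hgx : g x ∈ e.image g := by rw [hef]; exact Finset.mem_image_of_mem g hx
        rw [Finset.mem_image] at hgx
        obtain ⟨y, hy, hxy⟩ := hgx
        have := hinj ((h1 e he).1 hy) ((h1 f hf).1 hx) hxy
        rwa [this] at hy
      exact Finset.Subset.antisymm (fun x hx => ‹∀ x ∈ e, x ∈ f› x hx) this
    · intro e' he' f' hf' hne
      rw [Finset.mem_image] at he' hf'
      obtain ⟨e, he, rfl⟩ := he'
      obtain ⟨f, hf, rfl⟩ := hf'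
      have hef : e ≠ f := by rintro rfl; exact hne rfl
      rw [Finset.disjoint_left]
      intro x hx hx'
      rw [Finset.mem_image] at hx hx'
      obtain ⟨a, ha, rfl⟩ := hx
      obtain ⟨b, hb, hba⟩ := hx'
      have := hinj ((h1 f hf).1 hb) ((h1 e he).1 ha) hba
      subst this
      exact Finset.disjoint_left.mp (h3 e he f hf hef) ha hb
  · intro M hM N hN hMN
    rw [Finset.mem_coe, mem_matchings_iff] at hM hN
    have key : ∀ (P Q : Finset (Finset ℤ)), (∀ e ∈ P, e ⊆ W) → (∀ e ∈ Q, e ⊆ W) →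
        P.image (fun e => e.image g) = Q.image (fun e => e.image g) → P ⊆ Q := by
      intro P Q hP hQ hPQ e he
      have : e.image g ∈ Q.image (fun e => e.image g) := by
        rw [← hPQ]; exact Finset.mem_image_of_mem _ he
      rw [Finset.mem_image] at this
      obtain ⟨f, hf, hef⟩ := this
      have : f = e := by
        apply Finset.Subset.antisymm <;> intro x hx
        · have hgx : g x ∈ e.image g := by rw [← hef]; exact Finset.mem_image_of_mem g hx
          rw [Finset.mem_image] at hgx
          obtain ⟨y, hy, hxy⟩ := hgx
          rwa [hinj (hP e he hy) (hQ f hf hx) hxy] at hy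
        · have hgx : g x ∈ f.image g := by rw [hef]; exact Finset.mem_image_of_mem g hx
          rw [Finset.mem_image] at hgx
          obtain ⟨y, hy, hxy⟩ := hgx
          rwa [hinj (hQ f hf hy) (hP e he hx) hxy] at hy
      rwa [this] at hf
    exact Finset.Subset.antisymm
      (key M N (fun e he => (hM.1 e he).1) (fun e he => (hN.1 e he).1) hMN)
      (key N M (fun e he => (hN.1 e he).1) (fun e he => (hM.1 e he).1) hMN.symm)

lemma matchings_card_eq (W W' : Finset ℤ) (h : W.card = W'.card) (j : ℕ) :
    (matchings W j).card = (matchings W' j).card := by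
  classical
  obtain e := Finset.equivOfCardEq h
  let g : ℤ → ℤ := fun z => if hz : z ∈ W then (e ⟨z, hz⟩ : ℤ) else z
  let g' : ℤ → ℤ := fun z => if hz : z ∈ W' then (e.symm ⟨z, hz⟩ : ℤ) else z
  have hgW : ∀ z ∈ W, g z ∈ W' := by
    intro z hz; show (if hz : z ∈ W then ((e ⟨z, hz⟩ : W') : ℤ) else z) ∈ W'
    rw [dif_pos hz]; exact (e ⟨z, hz⟩).2
  have hg'W : ∀ z ∈ W', g' z ∈ W := by
    intro z hz; show (if hz : z ∈ W' then (e.symm ⟨z, hz⟩ : ℤ) else z) ∈ W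
    rw [dif_pos hz]; exact (e.symm ⟨z, hz⟩).2
  have hgg' : ∀ z ∈ W, g' (g z) = z := by
    intro z hz
    show (if hz' : g z ∈ W' then (e.symm ⟨g z, hz'⟩ : ℤ) else g z) = z
    rw [dif_pos (hgW z hz)]
    have : (⟨g z, hgW z hz⟩ : W') = e ⟨z, hz⟩ := by
      apply Subtype.ext; exact dif_pos hz
    rw [this, Equiv.symm_apply_apply]
  have hg'g : ∀ z ∈ W', g (g' z) = z := by
    intro z hz
    show (if hz' : g' z ∈ W then (e ⟨g' z, hz'⟩ : ℤ) else g' z) = z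
    rw [dif_pos (hg'W z hz)]
    have : (⟨g' z, hg'W z hz⟩ : W) = e.symm ⟨z, hz⟩ := by
      apply Subtype.ext; exact dif_pos hz
    rw [this, Equiv.apply_symm_apply]
  have hinj : Set.InjOn g W := by
    intro a ha b hb hab
    have := congrArg g' hab
    rwa [hgg' a ha, hgg' b hb] at this
  have hinj' : Set.InjOn g' W' := by
    intro a ha b hb hab
    have := congrArg g hab
    rwa [hg'g a ha, hg'g b hb] at this
  have himg : W.image g = W' := by
    apply Finset.Subset.antisymm
    · intro x hx
      rw [Finset.mem_image] at hx
      obtain ⟨a, ha, rfl⟩ := hx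
      exact hgW a ha
    · intro x hx
      rw [Finset.mem_image]
      exact ⟨g' x, hg'W x hx, hg'g x hx⟩
  have himg' : W'.image g' = W := by
    apply Finset.Subset.antisymm
    · intro x hx
      rw [Finset.mem_image] at hx
      obtain ⟨a, ha, rfl⟩ := hx
      exact hg'W a ha
    · intro x hx
      rw [Finset.mem_image]
      exact ⟨g x, hgW x hx, hgg' x hx⟩
  exact le_antisymm (matchings_card_le W W' g hinj himg j)
    (matchings_card_le W' W g' hinj' himg' j)

lemma matchings_nonempty {W : Finset ℤ} {j : ℕ} (h : 2 * j ≤ W.card) :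
    (matchings W j).Nonempty := by
  obtain ⟨T, hTW, hT⟩ := Finset.exists_subset_card_eq h
  refine ⟨canonMatching T, mem_matchings_iff.mpr ⟨?_, canon_card hT, fun e he f hf => canon_disjoint hT he hf⟩⟩
  intro e he
  exact ⟨(canon_edge_subset hT he).trans hTW, canon_edge_card hT he⟩

lemma edge_subset_biUnion {M₀ : Finset (Finset ℤ)} {e : Finset ℤ} (he : e ∈ M₀) :
    e ⊆ M₀.biUnion id := fun x hx => Finset.mem_biUnion.mpr ⟨e, he, hx⟩

lemma card_filter_superset (U : Finset ℤ) (k : ℕ) (M₀ : Finset (Finset ℤ))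
    (h0 : ∀ e ∈ M₀, e ⊆ U ∧ e.card = 2)
    (hdisj0 : ∀ e ∈ M₀, ∀ f ∈ M₀, e ≠ f → Disjoint e f)
    (hcard : M₀.card ≤ k) :
    ((matchings U k).filter fun M => M₀ ⊆ M).card
      = (matchings (U \ M₀.biUnion id) (k - M₀.card)).card := by
  classical
  apply Finset.card_bij' (fun M _ => M \ M₀) (fun N _ => N ∪ M₀)
  · -- forward maps into
    intro M hM
    rw [Finset.mem_filter, mem_matchings_iff] at hM
    obtain ⟨⟨h1, h2, h3⟩, hsub⟩ := hM
    rw [mem_matchings_iff]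
    refine ⟨?_, ?_, ?_⟩
    · intro e he
      have heM := (Finset.mem_sdiff.mp he).1
      have heM0 := (Finset.mem_sdiff.mp he).2
      refine ⟨?_, (h1 e heM).2⟩
      intro x hx
      rw [Finset.mem_sdiff]
      refine ⟨(h1 e heM).1 hx, ?_⟩
      intro hxS
      rw [Finset.mem_biUnion] at hxS
      obtain ⟨f, hf, hxf⟩ := hxS
      have hef : e ≠ f := by rintro rfl; exact heM0 hf
      exact Finset.disjoint_left.mp (h3 e heM f (hsub hf) hef) hx hxf
    · rw [Finset.card_sdiff_of_subset hsub, h2]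
    · intro e he f hf hef
      exact h3 e (Finset.mem_sdiff.mp he).1 f (Finset.mem_sdiff.mp hf).1 hef
  · -- backward maps into
    intro N hN
    rw [mem_matchings_iff] at hN
    obtain ⟨h1, h2, h3⟩ := hN
    have hNedge : ∀ e ∈ N, e ⊆ U \ M₀.biUnion id := fun e he => (h1 e he).1
    have hdisjNM : Disjoint N M₀ := by
      rw [Finset.disjoint_left]
      intro e heN heM0
      have h2e : e.card = 2 := (h1 e heN).2
      have : e.Nonempty := Finset.card_pos.mp (by omega)
      obtain ⟨x, hx⟩ := this
      have := (hNedge e heN hx)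
      rw [Finset.mem_sdiff] at this
      exact this.2 (edge_subset_biUnion heM0 hx)
    have hcross : ∀ e ∈ N, ∀ f ∈ M₀, Disjoint e f := by
      intro e he f hf
      rw [Finset.disjoint_left]
      intro x hx hxf
      have := hNedge e he hx
      rw [Finset.mem_sdiff] at this
      exact this.2 (edge_subset_biUnion hf hxf)
    rw [Finset.mem_filter, mem_matchings_iff]
    refine ⟨⟨?_, ?_, ?_⟩, Finset.subset_union_right⟩
    · intro e he
      rcases Finset.mem_union.mp he with h | h
      · exact ⟨((h1 e h).1).trans (Finset.sdiff_subset), (h1 e h).2⟩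
      · exact h0 e h
    · rw [Finset.card_union_of_disjoint hdisjNM, h2]
      omega
    · intro e he f hf hef
      rcases Finset.mem_union.mp he with h | h <;> rcases Finset.mem_union.mp hf with h' | h'
      · exact h3 e h f h' hef
      · exact hcross e h f h'
      · exact (hcross f h' e h).symm
      · exact hdisj0 e h f h' hef
  · -- left inverse
    intro M hM
    rw [Finset.mem_filter] at hM
    exact Finset.sdiff_union_of_subset hM.2
  · -- right inverse
    intro N hN
    rw [mem_matchings_iff] at hN
    apply Finset.union_sdiff_cancel_right
    rw [Finset.disjoint_left]
    intro e heN heM0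
    have h2e : e.card = 2 := (hN.1 e heN).2
    obtain ⟨x, hx⟩ := Finset.card_pos.mp (by omega : 0 < e.card)
    have := (hN.1 e heN).1 hx
    rw [Finset.mem_sdiff] at this
    exact this.2 (edge_subset_biUnion heM0 hx)

lemma dset_zero {K : Type*} [CommSemiring K] {ι : Type*} [DecidableEq ι] (S : Finset ι) :
    dset S (0 : MvPolynomial ι K) = 0 := by
  unfold dset
  induction S.toList with
  | nil => rfl
  | cons a l ih => simp [List.foldr_cons, ih]

lemma eval_dset_dset {K : Type*} [Field K] (U : Finset ℤ) (k : ℕ)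
    (Sf Tf : Finset (Finset ℤ)) :
    eval (fun _ => (1 : K)) (dset Sf (dset Tf (Phi K U k))) =
      (((matchings U k).filter fun M => Tf ⊆ M ∧ Sf ⊆ M \ Tf).card : K) := by
  classical
  rw [Phi, dset_sum, Finset.sum_congr rfl (fun M _ => dset_prod_X Tf M)]
  rw [dset_sum]
  have step : ∀ M ∈ matchings U k,
      dset Sf (if Tf ⊆ M then ∏ e ∈ M \ Tf, (X e : MvPolynomial (Finset ℤ) K) else 0) =
        if Tf ⊆ M ∧ Sf ⊆ M \ Tf then ∏ e ∈ (M \ Tf) \ Sf, X e else 0 := by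
    intro M _
    split_ifs with h1 h2 h2
    · rw [dset_prod_X, if_pos h2.2]
    · rw [dset_prod_X, if_neg (fun hc => h2 ⟨h1, hc⟩)]
    · exact absurd h2.1 h1
    · exact dset_zero Sf
  rw [Finset.sum_congr rfl step, map_sum]
  have step2 : ∀ M ∈ matchings U k,
      eval (fun _ => (1 : K)) (if Tf ⊆ M ∧ Sf ⊆ M \ Tf then ∏ e ∈ (M \ Tf) \ Sf, (X e : MvPolynomial (Finset ℤ) K) else 0) =
        if Tf ⊆ M ∧ Sf ⊆ M \ Tf then 1 else 0 := by
    intro M _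
    split_ifs with h
    · rw [map_prod]; simp
    · simp
  rw [Finset.sum_congr rfl step2, Finset.sum_boole]
open Finset

noncomputable def gAux (K : Type*) [Field K] (n t : ℕ) : ℕ → K
  | m =>
    ((if m = 0 then (1:K) else 0) -
      ∑ j ∈ (Finset.range m).attach,
        ((m.choose j.1 * (n - t - m).choose (t - j.1) : ℕ) : K) * gAux K n t j.1) /
    (((n - t - m).choose (t - m) : ℕ) : K)
termination_by m => m
decreasing_by exact (Finset.mem_range.mp j.2)

lemma gAux_prop (K : Type*) [Field K] [CharZero K] (n t m : ℕ) (hm : m ≤ t) (hn : 2 * t ≤ n) :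
    ∑ j ∈ Finset.range (m + 1),
      ((m.choose j * (n - t - m).choose (t - j) : ℕ) : K) * gAux K n t j =
      if m = 0 then 1 else 0 := by
  have hden : 0 < (n - t - m).choose (t - m) := Nat.choose_pos (by omega)
  have hdenK : (((n - t - m).choose (t - m) : ℕ) : K) ≠ 0 := by
    exact_mod_cast Nat.cast_pos.mpr hden |>.ne'
  rw [Finset.sum_range_succ]
  have hsum : ∑ j ∈ (Finset.range m).attach,
      ((m.choose j.1 * (n - t - m).choose (t - j.1) : ℕ) : K) * gAux K n t j.1 =
      ∑ j ∈ Finset.range m,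
      ((m.choose j * (n - t - m).choose (t - j) : ℕ) : K) * gAux K n t j := by
    rw [← Finset.sum_attach (Finset.range m)
      (fun j => ((m.choose j * (n - t - m).choose (t - j) : ℕ) : K) * gAux K n t j)]
  rw [gAux, hsum, Nat.choose_self, one_mul]
  field_simp
  ring

variable {ι : Type*} [DecidableEq ι]

lemma count_inter (U : Finset ι) (t j : ℕ) (hj : j ≤ t) (A C : Finset ι)
    (hA : A ⊆ U) (hAt : A.card = t) (hC : C ⊆ U) (hCt : C.card = t) :
    ((U.powersetCard t).filter fun B => Disjoint A B ∧ (B ∩ C).card = j).card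
      = (C \ A).card.choose j * (U \ (A ∪ C)).card.choose (t - j) := by
  classical
  rw [← Finset.card_powersetCard, ← Finset.card_powersetCard, ← Finset.card_product]
  apply Finset.card_bij' (fun B _ => (B ∩ C, B \ C))
    (fun P _ => P.1 ∪ P.2)
  · intro B hB
    rw [Finset.mem_filter, Finset.mem_powersetCard] at hB
    obtain ⟨⟨hBU, hBt⟩, hdisj, hBC⟩ := hB
    rw [Finset.mem_product, Finset.mem_powersetCard, Finset.mem_powersetCard]
    refine ⟨⟨?_, hBC⟩, ?_, ?_⟩
    · intro x hx
      rw [Finset.mem_inter] at hx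
      rw [Finset.mem_sdiff]
      exact ⟨hx.2, fun hxA => Finset.disjoint_left.mp hdisj hxA hx.1⟩
    · intro x hx
      rw [Finset.mem_sdiff] at hx ⊢
      refine ⟨hBU hx.1, ?_⟩
      rw [Finset.mem_union]
      rintro (h | h)
      · exact Finset.disjoint_left.mp hdisj h hx.1
      · exact hx.2 h
    · show (B \ C).card = t - j
      have := Finset.card_inter_add_card_sdiff B C
      omega
  · intro P hP
    rw [Finset.mem_product, Finset.mem_powersetCard, Finset.mem_powersetCard] at hP
    obtain ⟨⟨hP1, hP1c⟩, hP2, hP2c⟩ := hP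
    have hPC : P.1 ⊆ C := fun x hx => (Finset.mem_sdiff.mp (hP1 hx)).1
    have hPA : ∀ x ∈ P.1, x ∉ A := fun x hx => (Finset.mem_sdiff.mp (hP1 hx)).2
    have hQU : P.2 ⊆ U := fun x hx => (Finset.mem_sdiff.mp (hP2 hx)).1
    have hQAC : ∀ x ∈ P.2, x ∉ A ∪ C := fun x hx => (Finset.mem_sdiff.mp (hP2 hx)).2
    have hdisjPQ : Disjoint P.1 P.2 := by
      rw [Finset.disjoint_left]
      intro x hx1 hx2
      exact hQAC x hx2 (Finset.mem_union_right _ (hPC hx1))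
    rw [Finset.mem_filter, Finset.mem_powersetCard]
    refine ⟨⟨?_, ?_⟩, ?_, ?_⟩
    · intro x hx
      rcases Finset.mem_union.mp hx with h | h
      · exact hC (hPC h)
      · exact hQU h
    · rw [Finset.card_union_of_disjoint hdisjPQ, hP1c, hP2c]; omega
    · rw [Finset.disjoint_right]
      intro x hx
      rcases Finset.mem_union.mp hx with h | h
      · exact hPA x h
      · exact fun hxA => hQAC x h (Finset.mem_union_left _ hxA)
    · rw [Finset.union_inter_distrib_right]
      have h1 : P.1 ∩ C = P.1 := Finset.inter_eq_left.mpr hPC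
      have h2 : P.2 ∩ C = ∅ := by
        rw [Finset.eq_empty_iff_forall_notMem]
        intro x hx
        rw [Finset.mem_inter] at hx
        exact hQAC x hx.1 (Finset.mem_union_right _ hx.2)
      rw [h1, h2, Finset.union_empty, hP1c]
  · intro B hB
    show B ∩ C ∪ B \ C = B
    rw [Finset.union_comm]
    exact Finset.sdiff_union_inter B C
  · intro P hP
    rw [Finset.mem_product, Finset.mem_powersetCard, Finset.mem_powersetCard] at hP
    obtain ⟨⟨hP1, hP1c⟩, hP2, hP2c⟩ := hP
    have hPC : P.1 ⊆ C := fun x hx => (Finset.mem_sdiff.mp (hP1 hx)).1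
    have hQC : ∀ x ∈ P.2, x ∉ C := fun x hx =>
      fun hxC => (Finset.mem_sdiff.mp (hP2 hx)).2 (Finset.mem_union_right _ hxC)
    have e1 : (P.1 ∪ P.2) ∩ C = P.1 := by
      rw [Finset.union_inter_distrib_right, Finset.inter_eq_left.mpr hPC]
      have : P.2 ∩ C = ∅ := by
        rw [Finset.eq_empty_iff_forall_notMem]
        intro x hx
        rw [Finset.mem_inter] at hx
        exact hQC x hx.1 hx.2
      rw [this, Finset.union_empty]
    have e2 : (P.1 ∪ P.2) \ C = P.2 := by
      rw [Finset.union_sdiff_distrib]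
      have h1 : P.1 \ C = ∅ := Finset.sdiff_eq_empty_iff_subset.mpr hPC
      have h2 : P.2 \ C = P.2 := Finset.sdiff_eq_self_iff_disjoint.mpr
        (Finset.disjoint_left.mpr hQC)
      rw [h1, h2, Finset.empty_union]
    exact Prod.ext e1 e2

lemma disj_sum (K : Type*) [Field K] [CharZero K] (U : Finset ι) (t : ℕ)
    (hn : 2 * t ≤ U.card) {A C : Finset ι}
    (hA : A ∈ U.powersetCard t) (hC : C ∈ U.powersetCard t) :
    ∑ B ∈ U.powersetCard t,
      (if Disjoint A B then gAux K U.card t ((B ∩ C).card) else 0)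
      = if A = C then 1 else 0 := by
  classical
  rw [Finset.mem_powersetCard] at hA hC
  obtain ⟨hAU, hAt⟩ := hA
  obtain ⟨hCU, hCt⟩ := hC
  set n := U.card with hn'
  set s := (A ∩ C).card with hs
  have hst : s ≤ t := by
    rw [hs, ← hAt]
    exact Finset.card_le_card (Finset.inter_subset_left)
  set m := t - s with hm
  -- step 1: expand each summand over j
  have step1 : ∀ B ∈ U.powersetCard t,
      (if Disjoint A B then gAux K n t ((B ∩ C).card) else 0) =
        ∑ j ∈ Finset.range (t + 1),
          (if Disjoint A B ∧ (B ∩ C).card = j then gAux K n t j else 0) := by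
    intro B hB
    rw [Finset.mem_powersetCard] at hB
    have hBC : (B ∩ C).card ∈ Finset.range (t + 1) := by
      rw [Finset.mem_range]
      have := Finset.card_le_card (Finset.inter_subset_left (s₁ := B) (s₂ := C))
      omega
    by_cases hD : Disjoint A B
    · simp only [hD, true_and, if_true]
      rw [Finset.sum_ite_eq (Finset.range (t+1)) ((B ∩ C).card) (fun j => gAux K n t j), if_pos hBC]
    · simp [hD]
  rw [Finset.sum_congr rfl step1, Finset.sum_comm]
  -- step 2: inner sums are counts
  have step2 : ∀ j ∈ Finset.range (t + 1),
      (∑ B ∈ U.powersetCard t, if Disjoint A B ∧ (B ∩ C).card = j then gAux K n t j else 0)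
        = (((t - s).choose j * (n - (2 * t - s)).choose (t - j) : ℕ) : K) * gAux K n t j := by
    intro j hj
    rw [Finset.mem_range] at hj
    rw [← Finset.sum_filter, Finset.sum_const,
      count_inter U t j (by omega) A C hAU hAt hCU hCt]
    have e1 : (C \ A).card = t - s := by
      have := Finset.card_inter_add_card_sdiff C A
      rw [Finset.inter_comm] at this
      omega
    have e2 : (U \ (A ∪ C)).card = n - (2 * t - s) := by
      have h1 : (A ∪ C).card + (A ∩ C).card = A.card + C.card :=
        Finset.card_union_add_card_inter A C
      have h2 : (U \ (A ∪ C)).card = U.card - (A ∪ C).card :=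
        Finset.card_sdiff_of_subset (Finset.union_subset hAU hCU)
      have h3 : (A ∪ C).card ≤ U.card := Finset.card_le_card (Finset.union_subset hAU hCU)
      omega
    rw [e1, e2, nsmul_eq_mul, Nat.cast_mul]
  rw [Finset.sum_congr rfl step2]
  -- step 3: truncate the sum to range (m+1)
  have hnm : n - (2 * t - s) = n - t - m := by omega
  rw [hnm]
  have htrunc : ∑ j ∈ Finset.range (t + 1),
      (((t - s).choose j * (n - t - m).choose (t - j) : ℕ) : K) * gAux K n t j
      = ∑ j ∈ Finset.range (m + 1),
      ((m.choose j * (n - t - m).choose (t - j) : ℕ) : K) * gAux K n t j := by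
    rw [← hm]
    symm
    apply Finset.sum_subset
    · intro x hx
      rw [Finset.mem_range] at hx ⊢
      omega
    · intro x _ hx
      rw [Finset.mem_range, not_lt] at hx
      rw [Nat.choose_eq_zero_of_lt (by omega : m < x)]
      simp
  rw [htrunc, gAux_prop K n t m (by omega) hn]
  -- step 4: m = 0 iff A = C
  congr 1
  rw [eq_iff_iff]
  constructor
  · intro h0
    have hst' : s = t := by omega
    have : A ∩ C = A := Finset.eq_of_subset_of_card_le (Finset.inter_subset_left)
      (by rw [hAt, ← hs, hst'])
    have hAC : A ⊆ C := by rw [← this]; exact Finset.inter_subset_right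
    exact Finset.eq_of_subset_of_card_le hAC (by omega)
  · rintro rfl
    have : s = t := by rw [hs, Finset.inter_self, hAt]
    omega

section assembly
variable {K : Type*} [Field K] [CharZero K]

theorem det_hessian_ne_zero' (U : Finset ℤ) (k : ℕ) (hk : 2 * k ≤ U.card)
    (d : ℕ) (hd : 2 * d ≤ k) :
    eval (fun _ => (1 : K))
      (Matrix.det (Matrix.of fun V V' : (U.powersetCard (2 * d) : Finset (Finset ℤ)) =>
        dset (canonMatching V.1) (dset (canonMatching V'.1) (Phi K U k)))) ≠ 0 := by
  classical
  set n := U.card with hn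
  set t := 2 * d with ht
  -- reference count
  obtain ⟨W₀, hW₀U, hW₀c⟩ := Finset.exists_subset_card_eq (s := U) (n := n - 4 * d) (by omega)
  set c := (matchings W₀ (k - 2 * d)).card with hc
  have hcpos : 0 < c :=
    Finset.card_pos.mpr (matchings_nonempty (j := k - 2 * d) (by rw [hW₀c]; omega))
  -- basic facts about elements of the index set
  have hVfacts : ∀ V : (U.powersetCard t : Finset (Finset ℤ)), V.1 ⊆ U ∧ V.1.card = 2 * d := by
    intro V
    have := V.2
    rw [Finset.mem_powersetCard] at this
    exact ⟨this.1, by rw [← ht]; exact this.2⟩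
  -- entries of the evaluated matrix
  have hentry : ∀ V V' : (U.powersetCard t : Finset (Finset ℤ)),
      eval (fun _ => (1 : K)) (dset (canonMatching V.1) (dset (canonMatching V'.1) (Phi K U k)))
        = if Disjoint V.1 V'.1 then (c : K) else 0 := by
    intro V V'
    obtain ⟨hVU, hVc⟩ := hVfacts V
    obtain ⟨hV'U, hV'c⟩ := hVfacts V'
    rw [eval_dset_dset]
    by_cases hdisj : Disjoint V.1 V'.1
    · rw [if_pos hdisj]
      -- the canonical matchings are edge-disjoint
      have hedisj : ∀ e ∈ canonMatching V.1, e ∉ canonMatching V'.1 := by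
        intro e he he'
        have h2 : e.card = 2 := canon_edge_card hVc he
        obtain ⟨x, hx⟩ := Finset.card_pos.mp (by omega : 0 < e.card)
        exact Finset.disjoint_left.mp hdisj (canon_edge_subset hVc he hx)
          (canon_edge_subset hV'c he' hx)
      have hfilter : ((matchings U k).filter fun M =>
            canonMatching V'.1 ⊆ M ∧ canonMatching V.1 ⊆ M \ canonMatching V'.1)
          = (matchings U k).filter fun M =>
            (canonMatching V.1 ∪ canonMatching V'.1) ⊆ M := by
        apply Finset.filter_congr
        intro M _
        constructor
        · rintro ⟨h1, h2⟩
          apply Finset.union_subset (fun e he => (Finset.mem_sdiff.mp (h2 he)).1) h1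
        · intro h
          refine ⟨(Finset.subset_union_right).trans h, ?_⟩
          intro e he
          rw [Finset.mem_sdiff]
          exact ⟨h (Finset.mem_union_left _ he), hedisj e he⟩
      rw [hfilter]
      set M₀ := canonMatching V.1 ∪ canonMatching V'.1 with hM₀
      have hM₀edges : ∀ e ∈ M₀, e ⊆ U ∧ e.card = 2 := by
        intro e he
        rcases Finset.mem_union.mp he with h | h
        · exact ⟨(canon_edge_subset hVc h).trans hVU, canon_edge_card hVc h⟩
        · exact ⟨(canon_edge_subset hV'c h).trans hV'U, canon_edge_card hV'c h⟩
      have hM₀disj : ∀ e ∈ M₀, ∀ f ∈ M₀, e ≠ f → Disjoint e f := by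
        intro e he f hf hef
        rcases Finset.mem_union.mp he with h | h <;> rcases Finset.mem_union.mp hf with h' | h'
        · exact canon_disjoint hVc h h' hef
        · exact Disjoint.mono (canon_edge_subset hVc h)
            (canon_edge_subset hV'c h') hdisj
        · exact (Disjoint.mono (canon_edge_subset hVc h')
            (canon_edge_subset hV'c h) hdisj).symm
        · exact canon_disjoint hV'c h h' hef
      have hM₀card : M₀.card = 2 * d := by
        rw [hM₀, Finset.card_union_of_disjoint, canon_card hVc, canon_card hV'c]
        · omega
        · rw [Finset.disjoint_left]
          intro e he he'
          have h2 : e.card = 2 := canon_edge_card hVc he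
          obtain ⟨x, hx⟩ := Finset.card_pos.mp (by omega : 0 < e.card)
          exact Finset.disjoint_left.mp hdisj (canon_edge_subset hVc he hx)
            (canon_edge_subset hV'c he' hx)
      have hbiU : M₀.biUnion id = V.1 ∪ V'.1 := by
        rw [hM₀]
        apply Finset.Subset.antisymm
        · intro x hx
          rw [Finset.mem_biUnion] at hx
          obtain ⟨e, he, hx⟩ := hx
          rcases Finset.mem_union.mp he with h | h
          · exact Finset.mem_union_left _ (canon_edge_subset hVc h hx)
          · exact Finset.mem_union_right _ (canon_edge_subset hV'c h hx)
        · intro v hv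
          rcases Finset.mem_union.mp hv with h | h
          · obtain ⟨e, he, hve⟩ := canon_cover hVc h
            exact Finset.mem_biUnion.mpr ⟨e, Finset.mem_union_left _ he, hve⟩
          · obtain ⟨e, he, hve⟩ := canon_cover hV'c h
            exact Finset.mem_biUnion.mpr ⟨e, Finset.mem_union_right _ he, hve⟩
      rw [card_filter_superset U k M₀ hM₀edges hM₀disj (by omega)]
      rw [hM₀card, hbiU]
      congr 1
      apply matchings_card_eq
      rw [Finset.card_sdiff_of_subset (Finset.union_subset hVU hV'U),
        Finset.card_union_of_disjoint hdisj, hVc, hV'c, hW₀c]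
      omega
    · rw [if_neg hdisj]
      have : ((matchings U k).filter fun M =>
          canonMatching V'.1 ⊆ M ∧ canonMatching V.1 ⊆ M \ canonMatching V'.1) = ∅ := by
        rw [Finset.filter_eq_empty_iff]
        rintro M hM ⟨h1, h2⟩
        rw [mem_matchings_iff] at hM
        rw [Finset.not_disjoint_iff] at hdisj
        obtain ⟨v, hv, hv'⟩ := hdisj
        obtain ⟨e, he, hve⟩ := canon_cover hVc hv
        obtain ⟨f, hf, hvf⟩ := canon_cover hV'c hv'
        have heM : e ∈ M := (Finset.mem_sdiff.mp (h2 he)).1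
        have heM0 : e ∉ canonMatching V'.1 := (Finset.mem_sdiff.mp (h2 he)).2
        have hfM : f ∈ M := h1 hf
        have hef : e ≠ f := by rintro rfl; exact heM0 hf
        exact Finset.disjoint_left.mp (hM.2.2 e heM f hfM hef) hve hvf
      rw [this]
      simp
  -- now pass to matrices
  set I := (U.powersetCard t : Finset (Finset ℤ))
  set Amat : Matrix I I (MvPolynomial (Finset ℤ) K) :=
    Matrix.of fun V V' : I =>
      dset (canonMatching V.1) (dset (canonMatching V'.1) (Phi K U k)) with hAmat
  set D : Matrix I I K := Matrix.of fun V V' : I =>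
    if Disjoint V.1 V'.1 then (1 : K) else 0 with hD
  have hmap : Amat.map (eval (fun _ => (1 : K))) = (c : K) • D := by
    ext V V'
    rw [Matrix.map_apply, Matrix.smul_apply, hAmat, hD]
    simp only [Matrix.of_apply]
    rw [hentry V V']
    by_cases h : Disjoint V.1 V'.1
    · rw [if_pos h, if_pos h, smul_eq_mul, mul_one]
    · rw [if_neg h, if_neg h, smul_eq_mul, mul_zero]
  have hdet : eval (fun _ => (1 : K)) (Matrix.det Amat) = (c : K) ^ (Fintype.card I) * D.det := by
    rw [RingHom.map_det, RingHom.mapMatrix_apply, hmap, Matrix.det_smul]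
  -- D is invertible
  set E : Matrix I I K := Matrix.of fun B C : I =>
    gAux K n t ((B.1 ∩ C.1).card) with hE
  have hDE : D * E = 1 := by
    ext A C
    rw [Matrix.mul_apply]
    have : ∀ B : I, D A B * E B C
        = if Disjoint A.1 B.1 then gAux K n t ((B.1 ∩ C.1).card) else 0 := by
      intro B
      rw [hD, hE]
      show (Matrix.of _ A B) * (Matrix.of _ B C) = _
      rw [Matrix.of_apply, Matrix.of_apply]
      by_cases h : Disjoint A.1 B.1 <;> simp [h]
    rw [Finset.sum_congr rfl (fun B _ => this B)]
    have hsum := Finset.sum_coe_sort (U.powersetCard t)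
      (fun B => if Disjoint A.1 B then gAux K n t ((B ∩ C.1).card) else 0)
    rw [hsum, disj_sum K U t (by omega) A.2 C.2, Matrix.one_apply]
    by_cases h : A = C
    · rw [if_pos h, if_pos (by rw [h])]
    · rw [if_neg h, if_neg (fun h' => h (Subtype.ext h'))]
  have hDdet : D.det ≠ 0 := by
    intro h
    have := congrArg Matrix.det hDE
    rw [Matrix.det_mul, Matrix.det_one, h, zero_mul] at this
    exact zero_ne_one this
  rw [hdet]
  exact mul_ne_zero (pow_ne_zero _ (by exact_mod_cast Nat.cast_pos.mpr hcpos |>.ne')) hDdet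

end assembly

end

/-- when `2k ≤ |U|` and `2d ≤ k`, the evaluation at `x_e = 1` of the
determinant of `H_{U,k,d} = (∂^{M(V)} ∂^{M(V')} Φ_{U,k})_{V,V' ∈ C(U,2d)}` is a nonzero
element of `K`; in particular `det H_{U,k,d}` is a nonzero polynomial. -/
theorem det_hessian_ne_zero {K : Type*} [Field K] [CharZero K]
    (U : Finset ℤ) (hU : U.Nonempty) (k : ℕ) (hk : 2 * k ≤ U.card)
    (d : ℕ) (hd : 2 * d ≤ k) :
    eval (fun _ => (1 : K))
      (Matrix.det (Matrix.of fun V V' : (U.powersetCard (2 * d) : Finset (Finset ℤ)) =>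
        dset (canonMatching V.1) (dset (canonMatching V'.1) (Phi K U k)))) ≠ 0 ∧
    Matrix.det (Matrix.of fun V V' : (U.powersetCard (2 * d) : Finset (Finset ℤ)) =>
        dset (canonMatching V.1) (dset (canonMatching V'.1) (Phi K U k))) ≠ 0 := by
  have h1 := det_hessian_ne_zero' (K := K) U k hk d hd
  refine ⟨h1, fun h0 => h1 ?_⟩
  rw [h0]
  exact map_zero _
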